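/- Let P be a substring of T with |P| ≥ 2 whose SA interval I(P) equals a nonempty interval [b..e] for which case (A) holds. Then L[j] = P[1] for every j ∈ I(P[2..]); consequently, for every j ∈ I(P[2..]) one has SA[j] ≥ 2 and SA[j] − 1 ∈ Occ(T, P). In particular, if P = T[k..k+|P|−1] and v = SA[j] for some j ∈ I(P[2..]) satisfies v ≥ k + 2, then v − 1 is an occurrence of P with v − 1 ≥ k + 1. -/

import Mathlib

set_option linter.unusedSectionVars false
set_option maxHeartbeats 1000000


/-- The suffix `T[i..n]` of a 1-indexed string of length `n` (as a list). -/
def suffix {α : Type*} (T : ℕ → α) (n i : ℕ) : List α :=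
  (List.range' i (n + 1 - i)).map T

/-- `rank(L,c,i)`: the number of occurrences of the character `c` in `L[1..i]`. -/
def rankL {α : Type*} [DecidableEq α] (L : ℕ → α) (c : α) (i : ℕ) : ℕ :=
  ((Finset.Icc 1 i).filter (fun j => L j = c)).card

/-- `C[c]`: the number of positions `j ∈ [1..n]` with `L[j]` strictly smaller than `c`. -/
def Cc {α : Type*} [LinearOrder α] (L : ℕ → α) (n : ℕ) (c : α) : ℕ :=
  ((Finset.Icc 1 n).filter (fun j => L j < c)).card

/-- `LF(i) = C[L[i]] + rank(L, L[i], i)`. -/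
def LF {α : Type*} [LinearOrder α] (L : ℕ → α) (n i : ℕ) : ℕ :=
  Cc L n (L i) + rankL L (L i) i

/-- The SA interval of a nonempty string `Y`:
`I(Y) = {i ∈ [1..n] : Y is a prefix of T[SA[i]..]}`. -/
def SAIv {α : Type*} (T : ℕ → α) (SA : ℕ → ℕ) (n : ℕ) (Y : List α) : Set ℕ :=
  {i | 1 ≤ i ∧ i ≤ n ∧ Y <+: suffix T n (SA i)}

/-- The substring `T[x..x+l-1]` of a 1-indexed string, as a list. -/
def substr {α : Type*} (T : ℕ → α) (x l : ℕ) : List α :=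
  (List.range' x l).map T

/-- `Occ(T,P)`: the set of starting positions of occurrences of `P` in `T`. -/
def Occ {α : Type*} (T : ℕ → α) (n : ℕ) (P : List α) : Set ℕ :=
  {i | 1 ≤ i ∧ i + P.length ≤ n + 1 ∧ P = substr T i P.length}

/-- Case (A) holds for an interval `[b..e]` if there exists `i ∈ [1..r]` with
`Z[i] < b` and `e < Z[i+1] − 1`. -/
def CaseA (Z : ℕ → ℕ) (r b e : ℕ) : Prop :=
  ∃ i, 1 ≤ i ∧ i ≤ r ∧ Z i < b ∧ e < Z (i + 1) - 1


section Aux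
variable {α : Type*} [LinearOrder α]

private lemma lex_irrefl : ∀ (l : List α), ¬ List.Lex (· < ·) l l
  | [] => by intro h; cases h
  | (a :: l) => by
      intro h
      cases h with
      | rel h => exact lt_irrefl _ h
      | cons h => exact lex_irrefl l h

private lemma lex_asymm : ∀ {l l' : List α},
    List.Lex (· < ·) l l' → ¬ List.Lex (· < ·) l' l
  | [], _, _, h2 => by cases h2
  | (a :: l), (b :: l'), h1, h2 => by
      cases h1 with
      | rel h1 =>
        cases h2 with
        | rel h2 => exact absurd h1 (lt_asymm h2)
        | cons h2 => exact lt_irrefl _ h1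
      | cons h1 =>
        cases h2 with
        | rel h2 => exact lt_irrefl _ h2
        | cons h2 => exact lex_asymm h1 h2

private lemma lex_head_le {a b : α} {s t : List α}
    (h : List.Lex (· < ·) (a :: s) (b :: t)) : a ≤ b := by
  cases h with
  | rel h => exact le_of_lt h
  | cons h => exact le_rfl

private lemma lex_cons_tail {a : α} {s t : List α}
    (h : List.Lex (· < ·) (a :: s) (a :: t)) : List.Lex (· < ·) s t := by
  cases h with
  | rel h => exact absurd h (lt_irrefl _)
  | cons h => exact h

private lemma prefix_of_lex_between :
    ∀ (Q u v w : List α), Q <+: u → Q <+: w →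
      (u = v ∨ List.Lex (· < ·) u v) → (v = w ∨ List.Lex (· < ·) v w) → Q <+: v
  | [], _, _, _, _, _, _, _ => List.nil_prefix
  | (q :: Q'), u, v, w, hu, hw, h1, h2 => by
      obtain ⟨s, rfl⟩ := hu
      obtain ⟨s', rfl⟩ := hw
      match v with
      | [] =>
        rcases h1 with h1 | h1
        · exact absurd h1 (by simp)
        · exact absurd h1 (by intro h; cases h)
      | (a :: v') =>
        have hqa : q ≤ a := by
          rcases h1 with h1 | h1
          · rw [List.cons_append] at h1; exact le_of_eq (List.cons.inj h1).1
          · exact lex_head_le (by simpa using h1)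
        have haq : a ≤ q := by
          rcases h2 with h2 | h2
          · rw [List.cons_append] at h2
            exact le_of_eq (List.cons.inj h2).1
          · exact lex_head_le (by simpa using h2)
        have hae : a = q := le_antisymm haq hqa
        subst hae
        have h1' : (Q' ++ s) = v' ∨ List.Lex (· < ·) (Q' ++ s) v' := by
          rcases h1 with h1 | h1
          · rw [List.cons_append] at h1; exact Or.inl (List.cons.inj h1).2
          · exact Or.inr (lex_cons_tail (a := a) (by simpa using h1))
        have h2' : v' = (Q' ++ s') ∨ List.Lex (· < ·) v' (Q' ++ s') := by
          rcases h2 with h2 | h2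
          · rw [List.cons_append] at h2; exact Or.inl (List.cons.inj h2).2
          · exact Or.inr (lex_cons_tail (a := a) (by simpa using h2))
        have := prefix_of_lex_between Q' (Q' ++ s) v' (Q' ++ s') ⟨s, rfl⟩ ⟨s', rfl⟩ h1' h2'
        exact List.cons_prefix_cons.mpr ⟨rfl, this⟩

end Aux
section Aux2
variable {α : Type*} [LinearOrder α]

private lemma suffix_cons (T : ℕ → α) {n i : ℕ} (h2 : i ≤ n) :
    suffix T n i = T i :: suffix T n (i + 1) := by
  unfold suffix
  have h : n + 1 - i = (n - i) + 1 := by omega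
  rw [h, List.range'_succ]
  have h' : n + 1 - (i + 1) = n - i := by omega
  rw [h']
  simp

private lemma substr_cons (T : ℕ → α) (x l : ℕ) :
    substr T x (l + 1) = T x :: substr T (x + 1) l := by
  unfold substr
  rw [List.range'_succ]
  simp

private lemma length_suffix (T : ℕ → α) (n i : ℕ) : (suffix T n i).length = n + 1 - i := by
  simp [suffix]

private lemma prefix_suffix_eq_substr {T : ℕ → α} {n v : ℕ} {Q : List α} (hQ : Q ≠ [])
    (h : Q <+: suffix T n v) : Q = substr T v Q.length ∧ v + Q.length ≤ n + 1 := by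
  have hQ1 : 1 ≤ Q.length := List.length_pos_iff.mpr hQ
  have hlen : Q.length ≤ n + 1 - v := by
    have := h.length_le
    rwa [length_suffix] at this
  constructor
  · have hsplit : suffix T n v = substr T v Q.length ++
        (List.range' (v + Q.length) (n + 1 - v - Q.length)).map T := by
      unfold suffix substr
      rw [← List.map_append]
      congr 1
      have := List.range'_append (s := v) (m := Q.length) (n := n + 1 - v - Q.length) (step := 1)
      simp only [one_mul] at this
      rw [this]
      congr 1
      omega
    have htake := List.prefix_iff_eq_take.mp h
    rw [hsplit] at htake
    have hlen2 : (substr T v Q.length).length = Q.length := by simp [substr]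
    rw [List.take_left' hlen2] at htake
    exact htake
  · omega

-- rank lemmas
private lemma rank_mono (L : ℕ → α) (c : α) {i i' : ℕ} (h : i ≤ i') :
    rankL L c i ≤ rankL L c i' :=
  Finset.card_le_card (Finset.filter_subset_filter _ (Finset.Icc_subset_Icc le_rfl h))

private lemma rank_succ_eq (L : ℕ → α) (c : α) (i : ℕ) (h : L (i+1) = c) :
    rankL L c (i+1) = rankL L c i + 1 := by
  unfold rankL
  have : Finset.Icc 1 (i+1) = insert (i+1) (Finset.Icc 1 i) := by
    ext z; simp [Finset.mem_Icc]; omega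
  rw [this, Finset.filter_insert, if_pos h, Finset.card_insert_of_notMem]
  simp [Finset.mem_Icc]

private lemma rankL_pos (L : ℕ → α) {j : ℕ} (h : 1 ≤ j) : 1 ≤ rankL L (L j) j := by
  have : j ∈ (Finset.Icc 1 j).filter (fun i => L i = L j) := by
    simp [Finset.mem_Icc, h]
  exact Finset.card_pos.mpr ⟨j, this⟩

private lemma Cc_rank_le (L : ℕ → α) (n : ℕ) (c : α) {j : ℕ} (h : j ≤ n) :
    Cc L n c + rankL L c j ≤ n := by
  have h1 : rankL L c j ≤ ((Finset.Icc 1 n).filter (fun i => L i = c)).card :=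
    Finset.card_le_card (Finset.filter_subset_filter _ (Finset.Icc_subset_Icc le_rfl h))
  have h2 : Cc L n c + ((Finset.Icc 1 n).filter (fun i => L i = c)).card ≤ n := by
    unfold Cc
    rw [← Finset.card_union_of_disjoint]
    · calc _ ≤ (Finset.Icc 1 n).card := Finset.card_le_card (by
        intro z hz
        simp only [Finset.mem_union, Finset.mem_filter] at hz
        rcases hz with h | h <;> exact h.1)
      _ = n := by rw [Nat.card_Icc]; omega
    · rw [Finset.disjoint_left]
      intro a ha hb
      simp only [Finset.mem_filter] at ha hb
      rw [hb.2] at ha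
      exact lt_irrefl _ ha.2
  omega

end Aux2
section Aux3
variable {α : Type*} [LinearOrder α]

private lemma LF_bounds (L : ℕ → α) (n : ℕ) {j : ℕ} (h1 : 1 ≤ j) (h2 : j ≤ n) :
    1 ≤ LF L n j ∧ LF L n j ≤ n := by
  constructor
  · have := rankL_pos L h1
    unfold LF; omega
  · exact Cc_rank_le L n (L j) h2

private lemma Cc_mono_cnt (L : ℕ → α) (n : ℕ) {c c' : α} (h : c < c') {j : ℕ} (hj : j ≤ n) :
    Cc L n c + rankL L c j < Cc L n c' + 1 := by
  have h1 : rankL L c j ≤ ((Finset.Icc 1 n).filter (fun i => L i = c)).card :=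
    Finset.card_le_card (Finset.filter_subset_filter _ (Finset.Icc_subset_Icc le_rfl hj))
  have h2 : Cc L n c + ((Finset.Icc 1 n).filter (fun i => L i = c)).card ≤ Cc L n c' := by
    unfold Cc
    rw [← Finset.card_union_of_disjoint]
    · apply Finset.card_le_card
      intro z hz
      simp only [Finset.mem_union, Finset.mem_filter] at hz ⊢
      rcases hz with hz | hz
      · exact ⟨hz.1, lt_trans hz.2 h⟩
      · exact ⟨hz.1, hz.2 ▸ h⟩
    · rw [Finset.disjoint_left]
      intro a ha hb
      simp only [Finset.mem_filter] at ha hb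
      rw [hb.2] at ha
      exact lt_irrefl _ ha.2
  omega

private lemma LF_injOn (L : ℕ → α) (n : ℕ) :
    ∀ j j', 1 ≤ j → j ≤ n → 1 ≤ j' → j' ≤ n → LF L n j = LF L n j' → j = j' := by
  have key : ∀ j j', 1 ≤ j → j < j' → j' ≤ n → LF L n j ≠ LF L n j' := by
    intro j j' h1 h2 h3 heq
    unfold LF at heq
    rcases lt_trichotomy (L j) (L j') with hc | hc | hc
    · have := Cc_mono_cnt L n hc (le_trans (le_of_lt h2) h3)
      have hr := rankL_pos L (h1.trans (le_of_lt h2))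
      omega
    · rw [hc] at heq
      have hm : rankL L (L j') j ≤ rankL L (L j') (j' - 1) := rank_mono L _ (by omega)
      have hs : rankL L (L j') j' = rankL L (L j') (j' - 1) + 1 := by
        have := rank_succ_eq L (L j') (j' - 1) (by rw [show j' - 1 + 1 = j' by omega])
        rwa [show j' - 1 + 1 = j' by omega] at this
      omega
    · have := Cc_mono_cnt L n hc h3
      have hr := rankL_pos L h1
      omega
  intro j j' h1 h2 h3 h4 heq
  rcases lt_trichotomy j j' with h | h | h
  · exact absurd heq (key j j' h1 h h4)
  · exact h
  · exact absurd heq.symm (key j' j h3 h h2)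

private lemma LF_surj (L : ℕ → α) (n : ℕ) {q : ℕ} (h1 : 1 ≤ q) (h2 : q ≤ n) :
    ∃ j, 1 ≤ j ∧ j ≤ n ∧ LF L n j = q := by
  have himg : (Finset.Icc 1 n).image (LF L n) = Finset.Icc 1 n := by
    apply Finset.eq_of_subset_of_card_le
    · intro z hz
      simp only [Finset.mem_image, Finset.mem_Icc] at hz ⊢
      obtain ⟨a, ha, rfl⟩ := hz
      exact LF_bounds L n ha.1 ha.2
    · rw [Finset.card_image_of_injOn]
      intro a ha b hb hab
      simp only [Finset.coe_Icc, Set.mem_Icc] at ha hb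
      exact LF_injOn L n a b ha.1 ha.2 hb.1 hb.2 hab
  have : q ∈ (Finset.Icc 1 n).image (LF L n) := by
    rw [himg]; simp [Finset.mem_Icc]; omega
  simp only [Finset.mem_image, Finset.mem_Icc] at this
  obtain ⟨j, hj, hjq⟩ := this
  exact ⟨j, hj.1, hj.2, hjq⟩

end Aux3
section Aux4
variable {α : Type*} [LinearOrder α]

private lemma idx_lt_of_lex (n : ℕ) (T : ℕ → α) (SA : ℕ → ℕ)
    (hSAsorted : ∀ i j, 1 ≤ i → i < j → j ≤ n →
      List.Lex (· < ·) (suffix T n (SA i)) (suffix T n (SA j)))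
    {u t : ℕ} (hu1 : 1 ≤ u) (hun : u ≤ n) (ht1 : 1 ≤ t) (htn : t ≤ n)
    (h : List.Lex (· < ·) (suffix T n (SA u)) (suffix T n (SA t))) : u < t := by
  rcases lt_trichotomy u t with h' | h' | h'
  · exact h'
  · subst h'; exact absurd h (lex_irrefl _)
  · exact absurd h (lex_asymm (hSAsorted t u ht1 h' hun))

private lemma LF_eq (n : ℕ) (T : ℕ → α) (SA : ℕ → ℕ) (L : ℕ → α)
    (hlast : ∀ i, 1 ≤ i → i < n → T n < T i)
    (hSAbij : Set.BijOn SA (Set.Icc 1 n) (Set.Icc 1 n))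
    (hSAsorted : ∀ i j, 1 ≤ i → i < j → j ≤ n →
      List.Lex (· < ·) (suffix T n (SA i)) (suffix T n (SA j)))
    (hL : ∀ i, 1 ≤ i → i ≤ n → L i = if SA i = 1 then T n else T (SA i - 1))
    {j t : ℕ} (hj1 : 1 ≤ j) (hjn : j ≤ n) (ht1 : 1 ≤ t) (htn : t ≤ n)
    (hj2 : 2 ≤ SA j) (hts : SA t = SA j - 1) : LF L n j = t := by
  classical
  have hlt := fun {u t : ℕ} (hu1 : 1 ≤ u) (hun : u ≤ n) (ht1 : 1 ≤ t) (htn : t ≤ n) h =>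
    idx_lt_of_lex n T SA hSAsorted hu1 hun ht1 htn h
  have hSAmem : ∀ a, 1 ≤ a → a ≤ n → 1 ≤ SA a ∧ SA a ≤ n := fun a h1 h2 =>
    Set.mem_Icc.mp (hSAbij.mapsTo (Set.mem_Icc.mpr ⟨h1, h2⟩))
  set g := Function.invFunOn SA (Set.Icc 1 n) with hg
  have hInv := hSAbij.invOn_invFunOn
  have hgmem : ∀ w, 1 ≤ w → w ≤ n → 1 ≤ g w ∧ g w ≤ n := fun w h1 h2 =>
    Set.mem_Icc.mp (hSAbij.surjOn.mapsTo_invFunOn (Set.mem_Icc.mpr ⟨h1, h2⟩))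
  have hgl : ∀ a, 1 ≤ a → a ≤ n → g (SA a) = a := fun a h1 h2 =>
    hInv.1 (Set.mem_Icc.mpr ⟨h1, h2⟩)
  have hgr : ∀ w, 1 ≤ w → w ≤ n → SA (g w) = w := fun w h1 h2 =>
    hInv.2 (Set.mem_Icc.mpr ⟨h1, h2⟩)
  have hSAj := hSAmem j hj1 hjn
  have hSAt := hSAmem t ht1 htn
  set c0 := T (SA t) with hc0
  have hLj : L j = c0 := by
    rw [hL j hj1 hjn, if_neg (by omega : ¬ SA j = 1), ← hts]
  have hTn : T n < c0 := hlast (SA t) (by omega) (by omega)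
  -- τ : shift forward
  set τ : ℕ → ℕ := fun u => if SA u = n then g 1 else g (SA u + 1) with hτ
  have hSAτ : ∀ u, 1 ≤ u → u ≤ n →
      (SA u = n ∧ SA (τ u) = 1) ∨ (SA u < n ∧ SA (τ u) = SA u + 1) := by
    intro u h1 h2
    have hm := hSAmem u h1 h2
    by_cases hcase : SA u = n
    · left; refine ⟨hcase, ?_⟩
      simp only [hτ, if_pos hcase]; exact hgr 1 le_rfl (by omega)
    · right; refine ⟨by omega, ?_⟩
      simp only [hτ, if_neg hcase]; exact hgr _ (by omega) (by omega)
  have hτmem : ∀ u, 1 ≤ u → u ≤ n → 1 ≤ τ u ∧ τ u ≤ n := by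
    intro u h1 h2
    have hm := hSAmem u h1 h2
    by_cases hcase : SA u = n
    · simp only [hτ, if_pos hcase]; exact hgmem 1 le_rfl (by omega)
    · simp only [hτ, if_neg hcase]; exact hgmem _ (by omega) (by omega)
  have hLτ : ∀ u, 1 ≤ u → u ≤ n → L (τ u) = T (SA u) := by
    intro u h1 h2
    have hm := hτmem u h1 h2
    rcases hSAτ u h1 h2 with ⟨he, hv⟩ | ⟨he, hv⟩
    · rw [hL _ hm.1 hm.2, if_pos hv, he]
    · rw [hL _ hm.1 hm.2]
      have hm2 := hSAmem u h1 h2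
      have hne : ¬ SA (τ u) = 1 := by rw [hv]; omega
      rw [if_neg hne, hv, Nat.add_sub_cancel]
  have hτinj : ∀ u u', 1 ≤ u → u ≤ n → 1 ≤ u' → u' ≤ n → τ u = τ u' → u = u' := by
    intro u u' h1 h2 h3 h4 heq
    have e1 := hSAτ u h1 h2
    have e2 := hSAτ u' h3 h4
    have hm := hSAmem u h1 h2
    have hm' := hSAmem u' h3 h4
    have hSAeq : SA u = SA u' := by
      rcases e1 with ⟨a1, b1⟩ | ⟨a1, b1⟩ <;> rcases e2 with ⟨a2, b2⟩ | ⟨a2, b2⟩ <;>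
        rw [heq] at b1 <;> omega
    exact hSAbij.injOn (Set.mem_Icc.mpr ⟨h1, h2⟩) (Set.mem_Icc.mpr ⟨h3, h4⟩) hSAeq
  -- σ : shift backward
  set σ : ℕ → ℕ := fun w => if SA w = 1 then g n else g (SA w - 1) with hσ
  have hσmem : ∀ w, 1 ≤ w → w ≤ n → 1 ≤ σ w ∧ σ w ≤ n := by
    intro w h1 h2
    have hm := hSAmem w h1 h2
    by_cases hcase : SA w = 1
    · simp only [hσ, if_pos hcase]; exact hgmem n (by omega) le_rfl
    · simp only [hσ, if_neg hcase]; exact hgmem _ (by omega) (by omega)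
  have hSAσ : ∀ w, 1 ≤ w → w ≤ n →
      (SA w = 1 ∧ SA (σ w) = n) ∨ (2 ≤ SA w ∧ SA (σ w) = SA w - 1) := by
    intro w h1 h2
    have hm := hSAmem w h1 h2
    by_cases hcase : SA w = 1
    · left; refine ⟨hcase, ?_⟩
      simp only [hσ, if_pos hcase]; exact hgr n (by omega) le_rfl
    · right; refine ⟨by omega, ?_⟩
      simp only [hσ, if_neg hcase]; exact hgr _ (by omega) (by omega)
  have hτσ : ∀ w, 1 ≤ w → w ≤ n → τ (σ w) = w := by
    intro w h1 h2
    have hm := hSAmem w h1 h2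
    rcases hSAσ w h1 h2 with ⟨a, bσ⟩ | ⟨a, bσ⟩
    · simp only [hτ, if_pos bσ, ← a]
      exact hgl w h1 h2
    · have hne : ¬ SA (σ w) = n := by omega
      simp only [hτ, if_neg hne]
      rw [bσ, show SA w - 1 + 1 = SA w by omega]
      exact hgl w h1 h2
  have hLσ : ∀ w, 1 ≤ w → w ≤ n → T (SA (σ w)) = L w := by
    intro w h1 h2
    rcases hSAσ w h1 h2 with ⟨a, bσ⟩ | ⟨a, bσ⟩
    · rw [bσ, hL w h1 h2, if_pos a]
    · rw [bσ, hL w h1 h2, if_neg (show ¬ SA w = 1 by omega)]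
  -- order preservation
  have hmono : ∀ u u', 1 ≤ u → u ≤ n → 1 ≤ u' → u' ≤ n → T (SA u) = c0 → T (SA u') = c0 →
      u < u' → τ u < τ u' := by
    intro u u' h1 h2 h3 h4 hcu hcu' hlt'
    have hm := hSAmem u h1 h2
    have hm' := hSAmem u' h3 h4
    have hun : ¬ SA u = n := by
      intro h; rw [h] at hcu; exact (ne_of_lt hTn) hcu
    have hu'n : ¬ SA u' = n := by
      intro h; rw [h] at hcu'; exact (ne_of_lt hTn) hcu'
    obtain ⟨a1, b1⟩ : SA u < n ∧ SA (τ u) = SA u + 1 := by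
      rcases hSAτ u h1 h2 with ⟨a, _⟩ | h
      · exact absurd a hun
      · exact h
    obtain ⟨a2, b2⟩ : SA u' < n ∧ SA (τ u') = SA u' + 1 := by
      rcases hSAτ u' h3 h4 with ⟨a, _⟩ | h
      · exact absurd a hu'n
      · exact h
    have hlex := hSAsorted u u' h1 hlt' h4
    rw [suffix_cons T hm.2, suffix_cons T hm'.2, hcu, hcu'] at hlex
    have hlex' := lex_cons_tail hlex
    rw [← b1, ← b2] at hlex'
    exact hlt (hτmem u h1 h2).1 (hτmem u h1 h2).2 (hτmem u' h3 h4).1 (hτmem u' h3 h4).2 hlex'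
  -- τ t = j
  have hτt : τ t = j := by
    have hm := hτmem t ht1 htn
    apply hSAbij.injOn (Set.mem_Icc.mpr ⟨hm.1, hm.2⟩) (Set.mem_Icc.mpr ⟨hj1, hjn⟩)
    rcases hSAτ t ht1 htn with ⟨a, b⟩ | ⟨a, b⟩ <;> omega
  -- the two finsets
  set f1 := (Finset.Icc 1 n).filter (fun u => T (SA u) < c0) with hf1
  set f2 := (Finset.Icc 1 n).filter (fun u => T (SA u) = c0 ∧ u ≤ t) with hf2
  have hsplit : Finset.Icc 1 t = f1 ∪ f2 := by
    ext u
    simp only [hf1, hf2, Finset.mem_union, Finset.mem_filter, Finset.mem_Icc]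
    constructor
    · rintro ⟨h1, h2⟩
      have hun' : u ≤ n := le_trans h2 htn
      rcases eq_or_lt_of_le h2 with heq | hlt2
      · subst heq; exact Or.inr ⟨⟨h1, hun'⟩, rfl, le_rfl⟩
      · have hlex := hSAsorted u t h1 hlt2 htn
        have hmu := hSAmem u h1 hun'
        rw [suffix_cons T hmu.2, suffix_cons T hSAt.2] at hlex
        rcases lt_or_eq_of_le (lex_head_le hlex) with hh | hh
        · exact Or.inl ⟨⟨h1, hun'⟩, hh⟩
        · exact Or.inr ⟨⟨h1, hun'⟩, hh, h2⟩
    · rintro (⟨⟨h1, h2⟩, hlt'⟩ | ⟨⟨h1, h2⟩, _, hle⟩)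
      · refine ⟨h1, le_of_lt (hlt h1 h2 ht1 htn ?_)⟩
        rw [suffix_cons T (hSAmem u h1 h2).2, suffix_cons T hSAt.2]
        exact List.Lex.rel hlt'
      · exact ⟨h1, hle⟩
  have hdisj : Disjoint f1 f2 := by
    rw [Finset.disjoint_left]
    intro a ha hb
    simp only [hf1, hf2, Finset.mem_filter] at ha hb
    rw [hb.2.1] at ha
    exact lt_irrefl _ ha.2
  have hcard1 : f1.card = Cc L n c0 := by
    unfold Cc
    apply Finset.card_nbij (i := τ)
    · intro u hu
      simp only [hf1, Finset.mem_coe, Finset.mem_filter, Finset.mem_Icc] at hu ⊢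
      obtain ⟨⟨h1, h2⟩, hlt'⟩ := hu
      exact ⟨hτmem u h1 h2, by rw [hLτ u h1 h2]; exact hlt'⟩
    · intro a ha b hb heq
      simp only [hf1, Finset.coe_filter, Set.mem_setOf_eq, Finset.mem_Icc] at ha hb
      exact hτinj a b ha.1.1 ha.1.2 hb.1.1 hb.1.2 heq
    · intro w hw
      simp only [Finset.coe_filter, Set.mem_setOf_eq, Finset.mem_Icc] at hw
      obtain ⟨⟨h1, h2⟩, hlw⟩ := hw
      refine ⟨σ w, ?_, hτσ w h1 h2⟩
      simp only [hf1, Finset.coe_filter, Set.mem_setOf_eq, Finset.mem_Icc]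
      exact ⟨hσmem w h1 h2, by rw [hLσ w h1 h2]; exact hlw⟩
  have hrank2 : rankL L c0 j = ((Finset.Icc 1 n).filter (fun w => L w = c0 ∧ w ≤ j)).card := by
    unfold rankL
    congr 1
    ext w
    simp only [Finset.mem_filter, Finset.mem_Icc]
    constructor
    · rintro ⟨⟨a, b⟩, hc⟩; exact ⟨⟨a, le_trans b hjn⟩, hc, b⟩
    · rintro ⟨⟨a, b⟩, hc, d⟩; exact ⟨⟨a, d⟩, hc⟩
  have hcard2 : f2.card = rankL L c0 j := by
    rw [hrank2]
    apply Finset.card_nbij (i := τ)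
    · intro u hu
      simp only [hf2, Finset.mem_coe, Finset.mem_filter, Finset.mem_Icc] at hu ⊢
      obtain ⟨⟨h1, h2⟩, hcu, hle⟩ := hu
      refine ⟨hτmem u h1 h2, by rw [hLτ u h1 h2]; exact hcu, ?_⟩
      rcases eq_or_lt_of_le hle with heq | hlt2
      · subst heq; rw [hτt]
      · have := hmono u t h1 h2 ht1 htn hcu rfl hlt2
        rw [hτt] at this
        omega
    · intro a ha b hb heq
      simp only [hf2, Finset.coe_filter, Set.mem_setOf_eq, Finset.mem_Icc] at ha hb
      exact hτinj a b ha.1.1 ha.1.2 hb.1.1 hb.1.2 heq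
    · intro w hw
      simp only [Finset.coe_filter, Set.mem_setOf_eq, Finset.mem_Icc] at hw
      obtain ⟨⟨h1, h2⟩, hLw, hwj⟩ := hw
      refine ⟨σ w, ?_, hτσ w h1 h2⟩
      have hm := hσmem w h1 h2
      have hT : T (SA (σ w)) = c0 := by rw [hLσ w h1 h2]; exact hLw
      simp only [hf2, Finset.coe_filter, Set.mem_setOf_eq, Finset.mem_Icc]
      refine ⟨⟨hm.1, hm.2⟩, hT, ?_⟩
      by_contra hgt
      push_neg at hgt
      have := hmono t (σ w) ht1 htn hm.1 hm.2 rfl hT hgt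
      rw [hτt, hτσ w h1 h2] at this
      omega
  calc LF L n j = Cc L n c0 + rankL L c0 j := by unfold LF; rw [hLj]
  _ = f1.card + f2.card := by rw [hcard1, hcard2]
  _ = (f1 ∪ f2).card := (Finset.card_union_of_disjoint hdisj).symm
  _ = (Finset.Icc 1 t).card := by rw [hsplit]
  _ = t := by rw [Nat.card_Icc]; omega

end Aux4
section Aux5
variable {α : Type*} [LinearOrder α]

private lemma p_lt (r : ℕ) (p len : ℕ → ℕ)
    (hpsucc : ∀ m, 1 ≤ m → m ≤ r → p (m + 1) = p m + len m)
    (hlen : ∀ m, 1 ≤ m → m ≤ r → 1 ≤ len m) :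
    ∀ a a', 1 ≤ a → a < a' → a' ≤ r + 1 → p a < p a' := by
  intro a a' h1 h2 h3
  induction a' with
  | zero => omega
  | succ a'' ih =>
    have ha'' : 1 ≤ a'' := by omega
    have ha''r : a'' ≤ r := by omega
    have hstep : p (a'' + 1) = p a'' + len a'' := hpsucc a'' ha'' ha''r
    have hl := hlen a'' ha'' ha''r
    rcases Nat.lt_or_ge a a'' with h | h
    · have := ih h (by omega)
      omega
    · have heq : a = a'' := by omega
      subst heq
      omega

private lemma run_of_pos (n r : ℕ) (p len : ℕ → ℕ) (hr : 1 ≤ r) (hp1 : p 1 = 1)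
    (hpend : p (r + 1) = n + 1)
    (hpsucc : ∀ m, 1 ≤ m → m ≤ r → p (m + 1) = p m + len m)
    (hlen : ∀ m, 1 ≤ m → m ≤ r → 1 ≤ len m)
    {j : ℕ} (h1 : 1 ≤ j) (h2 : j ≤ n) :
    ∃ m, 1 ≤ m ∧ m ≤ r ∧ p m ≤ j ∧ j < p (m + 1) := by
  classical
  have hne : ((Finset.Icc 1 r).filter (fun m => p m ≤ j)).Nonempty := by
    refine ⟨1, ?_⟩
    simp only [Finset.mem_filter, Finset.mem_Icc, hp1]
    omega
  set S := (Finset.Icc 1 r).filter (fun m => p m ≤ j) with hS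
  have hmem := S.max'_mem hne
  obtain ⟨hin, hmle⟩ := Finset.mem_filter.mp hmem
  obtain ⟨hm1, hmr⟩ := Finset.mem_Icc.mp hin
  refine ⟨S.max' hne, hm1, hmr, hmle, ?_⟩
  by_cases hc : S.max' hne = r
  · rw [hc, hpend]; omega
  · by_contra hcon
    push_neg at hcon
    have hmemS : S.max' hne + 1 ∈ S :=
      Finset.mem_filter.mpr ⟨Finset.mem_Icc.mpr ⟨by omega, by omega⟩, by omega⟩
    have := S.le_max' _ hmemS
    omega

private lemma LF_run (n : ℕ) (L : ℕ → α) {s0 l : ℕ}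
    (hconst : ∀ j, s0 ≤ j → j < s0 + l → L j = L s0) :
    ∀ k, k < l → LF L n (s0 + k) = LF L n s0 + k := by
  intro k hk
  induction k with
  | zero => simp
  | succ k' ih =>
    have ih' := ih (by omega)
    have hLk : L (s0 + k' + 1) = L s0 := hconst _ (by omega) (by omega)
    have hLk' : L (s0 + k') = L s0 := hconst _ (by omega) (by omega)
    have hrs : rankL L (L s0) (s0 + k' + 1) = rankL L (L s0) (s0 + k') + 1 :=
      rank_succ_eq L (L s0) (s0 + k') hLk
    have hgoal : LF L n (s0 + k' + 1) = LF L n s0 + (k' + 1) := by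
      unfold LF at ih' ⊢
      rw [hLk'] at ih'
      rw [show L (s0 + k' + 1) = L s0 from hLk]
      omega
    exact hgoal

end Aux5
/-- Let `P = c :: Q` (so `|P| ≥ 2` since `Q ≠ []`) be a substring of `T`
starting at position `x` whose SA interval equals a nonempty interval `[b..e]`
for which case (A) holds.  Then `L[j] = P[1]` for every `j ∈ I(P[2..])`;
consequently, for every `j ∈ I(P[2..])`, `SA[j] ≥ 2` and
`SA[j] − 1 ∈ Occ(T, P)`.  In particular, if `v = SA[j]` satisfies `v ≥ x + 2`,
then `v − 1` is an occurrence of `P` with `v − 1 ≥ x + 1`. -/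
theorem stmt8 {α : Type*} [LinearOrder α] (n : ℕ) (hn : 1 ≤ n)
    (T : ℕ → α) (SA : ℕ → ℕ) (L : ℕ → α)
    (hlast : ∀ i, 1 ≤ i → i < n → T n < T i)
    (hSAbij : Set.BijOn SA (Set.Icc 1 n) (Set.Icc 1 n))
    (hSAsorted : ∀ i j, 1 ≤ i → i < j → j ≤ n →
      List.Lex (· < ·) (suffix T n (SA i)) (suffix T n (SA j)))
    (hL : ∀ i, 1 ≤ i → i ≤ n → L i = if SA i = 1 then T n else T (SA i - 1))
    -- the run-length encoding `L_1, …, L_r` of `L`: run `L_m` starts at `p m`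
    -- and has length `len m`
    (r : ℕ) (p len : ℕ → ℕ) (hr : 1 ≤ r)
    (hp1 : p 1 = 1) (hpend : p (r + 1) = n + 1)
    (hpsucc : ∀ m, 1 ≤ m → m ≤ r → p (m + 1) = p m + len m)
    (hlen : ∀ m, 1 ≤ m → m ≤ r → 1 ≤ len m)
    (hrunconst : ∀ m, 1 ≤ m → m ≤ r → ∀ j, p m ≤ j → j < p (m + 1) → L j = L (p m))
    (hrunmax : ∀ m, 1 ≤ m → m < r → L (p m) ≠ L (p (m + 1)))
    -- `X` is the permutation of `[1..r]` sorting the runs by `LF(p(·))`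
    (X : ℕ → ℕ)
    (hXbij : Set.BijOn X (Set.Icc 1 r) (Set.Icc 1 r))
    (hXsorted : ∀ i j, 1 ≤ i → i < j → j ≤ r → LF L n (p (X i)) < LF L n (p (X j)))
    -- `Z[i] = LF(p(X[i]))` for `i ∈ [1..r]`, and `Z[r+1] = n+1`
    (Z : ℕ → ℕ)
    (hZ : ∀ i, 1 ≤ i → i ≤ r → Z i = LF L n (p (X i)))
    (hZend : Z (r + 1) = n + 1)
    (c : α) (Q : List α) (hQ : Q ≠ []) (x : ℕ)
    (hx1 : 1 ≤ x) (hxn : x + (c :: Q).length ≤ n + 1)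
    (hsub : c :: Q = substr T x (c :: Q).length)
    (b e : ℕ) (hbe : b ≤ e)
    (hIv : SAIv T SA n (c :: Q) = Set.Icc b e)
    (hA : CaseA Z r b e) :
    ∀ j ∈ SAIv T SA n Q,
      L j = c ∧ 2 ≤ SA j ∧ SA j - 1 ∈ Occ T n (c :: Q) ∧
      (x + 2 ≤ SA j → x + 1 ≤ SA j - 1 ∧ SA j - 1 ∈ Occ T n (c :: Q)) := by
  
  intro j hjQ
  classical
  -- basic facts about c and Q
  have hQ1 : 1 ≤ Q.length := List.length_pos_iff.mpr hQ
  have hlenP : (c :: Q).length = Q.length + 1 := by simp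
  have hxlt : x < n := by rw [hlenP] at hxn; omega
  have hcQ : c = T x := by
    have h := hsub
    rw [hlenP, substr_cons] at h
    exact (List.cons.inj h).1
  have hTnc : T n < c := by rw [hcQ]; exact hlast x hx1 hxlt
  have hSAmem : ∀ a, 1 ≤ a → a ≤ n → 1 ≤ SA a ∧ SA a ≤ n := fun a h1 h2 =>
    Set.mem_Icc.mp (hSAbij.mapsTo (Set.mem_Icc.mpr ⟨h1, h2⟩))
  have hbI : b ∈ SAIv T SA n (c :: Q) := by rw [hIv]; exact Set.mem_Icc.mpr ⟨le_rfl, hbe⟩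
  obtain ⟨hb1, hbn, -⟩ := hbI
  -- forward lemma
  have hF : ∀ w, w ∈ SAIv T SA n Q → L w = c → b ≤ LF L n w ∧ LF L n w ≤ e := by
    intro w hw hLw
    obtain ⟨hw1, hwn, hwpre⟩ := hw
    have hSAw := hSAmem w hw1 hwn
    have hw2 : 2 ≤ SA w := by
      by_contra hcon
      have h1 : SA w = 1 := by omega
      rw [hL w hw1 hwn, if_pos h1] at hLw
      exact (ne_of_lt hTnc) hLw
    have hTv : T (SA w - 1) = c := by
      rw [hL w hw1 hwn, if_neg (show ¬ SA w = 1 by omega)] at hLw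
      exact hLw
    obtain ⟨t, htmem, hSAt⟩ := hSAbij.surjOn
      (Set.mem_Icc.mpr ⟨(by omega : 1 ≤ SA w - 1), (by omega : SA w - 1 ≤ n)⟩)
    obtain ⟨ht1, htn⟩ := Set.mem_Icc.mp htmem
    have hLF := LF_eq n T SA L hlast hSAbij hSAsorted hL hw1 hwn ht1 htn hw2 hSAt
    have htI : t ∈ SAIv T SA n (c :: Q) := by
      refine ⟨ht1, htn, ?_⟩
      rw [suffix_cons T (show SA t ≤ n by omega)]
      apply List.cons_prefix_cons.mpr
      constructor
      · rw [hSAt]; exact hTv.symm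
      · rw [show SA t + 1 = SA w by omega]; exact hwpre
    rw [hIv] at htI
    obtain ⟨hbt, hte⟩ := Set.mem_Icc.mp htI
    rw [hLF]
    exact ⟨hbt, hte⟩
  -- case (A) data and run facts
  obtain ⟨i, hi1, hir, hZib, heZ⟩ := hA
  have hmI := Set.mem_Icc.mp (hXbij.mapsTo (Set.mem_Icc.mpr ⟨hi1, hir⟩))
  have hm1 := hmI.1
  have hmr := hmI.2
  have hZi : Z i = LF L n (p (X i)) := hZ i hi1 hir
  have hplt := p_lt r p len hpsucc hlen
  have hple : ∀ a a', 1 ≤ a → a ≤ a' → a' ≤ r + 1 → p a ≤ p a' := by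
    intro a a' h1 h2 h3
    rcases eq_or_lt_of_le h2 with h | h
    · rw [h]
    · exact le_of_lt (hplt a a' h1 h h3)
  have hpm1 : 1 ≤ p (X i) := by rw [← hp1]; exact hple 1 (X i) le_rfl hm1 (by omega)
  have hpsm : p (X i + 1) = p (X i) + len (X i) := hpsucc _ hm1 hmr
  have hpmn : p (X i) + len (X i) ≤ n + 1 := by
    rw [← hpsm, ← hpend]
    exact hple (X i + 1) (r + 1) (by omega) (by omega) le_rfl
  have hlenm := hlen _ hm1 hmr
  have hconst : ∀ w, p (X i) ≤ w → w < p (X i) + len (X i) → L w = L (p (X i)) := by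
    intro w hw1 hw2
    exact hrunconst _ hm1 hmr w hw1 (by omega)
  have hLFrun : ∀ k, k < len (X i) → LF L n (p (X i) + k) = LF L n (p (X i)) + k :=
    LF_run n L hconst
  have hLFb : ∀ w, 1 ≤ w → w ≤ n → 1 ≤ LF L n w ∧ LF L n w ≤ n := fun w h1 h2 =>
    LF_bounds L n h1 h2
  have hZsucc : Z i < Z (i + 1) := by
    by_cases hc : i = r
    · have h1 : Z (i + 1) = n + 1 := by rw [hc]; exact hZend
      have h2 := (hLFb (p (X i)) hpm1 (by omega)).2
      omega
    · rw [hZi, hZ (i + 1) (by omega) (by omega)]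
      exact hXsorted i (i + 1) hi1 (by omega) (by omega)
  -- claim K : Z (i+1) ≤ Z i + len (X i)
  have hK : Z (i + 1) ≤ Z i + len (X i) := by
    by_contra hcon
    push_neg at hcon
    have hq1 : 1 ≤ Z i + len (X i) := by
      have := (hLFb (p (X i)) hpm1 (by omega)).1
      omega
    have hZ1n : Z (i + 1) ≤ n + 1 := by
      by_cases hc : i = r
      · rw [hc, hZend]
      · rw [hZ (i + 1) (by omega) (by omega)]
        have hmI' := Set.mem_Icc.mp (hXbij.mapsTo
          (show (i + 1) ∈ Set.Icc 1 r from Set.mem_Icc.mpr ⟨by omega, by omega⟩))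
        have hp0 : p 1 ≤ p (X (i + 1)) := hple 1 (X (i + 1)) le_rfl hmI'.1 (by omega)
        have hp1' : 1 ≤ p (X (i + 1)) := by omega
        have h3 := hpsucc _ hmI'.1 hmI'.2
        have h4 := hlen _ hmI'.1 hmI'.2
        have h5 : p (X (i + 1) + 1) ≤ p (r + 1) := hple _ (r + 1) (by omega) (by omega) le_rfl
        have h6 := (hLFb (p (X (i + 1))) hp1' (by omega)).2
        omega
    have hqn : Z i + len (X i) ≤ n := by omega
    obtain ⟨j0, hj01, hj0n, hj0q⟩ := LF_surj L n hq1 hqn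
    obtain ⟨m0, hm01, hm0r, hm0le, hm0lt⟩ :=
      run_of_pos n r p len hr hp1 hpend hpsucc hlen hj01 hj0n
    have hpm0succ := hpsucc m0 hm01 hm0r
    have hconst0 : ∀ w, p m0 ≤ w → w < p m0 + len m0 → L w = L (p m0) := by
      intro w hw1 hw2
      exact hrunconst m0 hm01 hm0r w hw1 (by omega)
    have hpm01 : 1 ≤ p m0 := by rw [← hp1]; exact hple 1 m0 le_rfl hm01 (by omega)
    have hpm0n : p m0 + len m0 ≤ n + 1 := by
      rw [← hpm0succ, ← hpend]
      exact hple (m0 + 1) (r + 1) (by omega) (by omega) le_rfl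
    have hk0lt : j0 - p m0 < len m0 := by omega
    have hj0eq : j0 = p m0 + (j0 - p m0) := by omega
    have hrun0 : LF L n (p m0 + (j0 - p m0)) = LF L n (p m0) + (j0 - p m0) :=
      LF_run n L hconst0 _ hk0lt
    obtain ⟨i0, hi0mem, hXi0⟩ := hXbij.surjOn (Set.mem_Icc.mpr ⟨hm01, hm0r⟩)
    obtain ⟨hi01, hi0r⟩ := Set.mem_Icc.mp hi0mem
    have hZi0 : Z i0 = LF L n (p m0) := by rw [hZ i0 hi01 hi0r, hXi0]
    have hq : Z i0 + (j0 - p m0) = Z i + len (X i) := by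
      rw [hZi0, ← hrun0, ← hj0eq, hj0q]
    rcases lt_trichotomy i0 i with hcase | hcase | hcase
    · have hZlt : Z i0 < Z i := by
        rw [hZi0, hZi, ← hXi0]; exact hXsorted i0 i hi01 hcase hir
      have hk1lt : Z i - Z i0 < len m0 := by omega
      have hrun1 : LF L n (p m0 + (Z i - Z i0)) = LF L n (p m0) + (Z i - Z i0) :=
        LF_run n L hconst0 _ hk1lt
      have hmem1 : 1 ≤ p m0 + (Z i - Z i0) ∧ p m0 + (Z i - Z i0) ≤ n := by omega
      have hLFeq : LF L n (p m0 + (Z i - Z i0)) = LF L n (p (X i)) := by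
        rw [hrun1, ← hZi0, ← hZi]; omega
      have hpeq := LF_injOn L n _ _ hmem1.1 hmem1.2 hpm1 (by omega : p (X i) ≤ n) hLFeq
      have hlt1 : m0 < X i := by
        by_contra hcc
        push_neg at hcc
        have := hple (X i) m0 hm1 hcc (by omega)
        omega
      have hlt2 : X i < m0 + 1 := by
        by_contra hcc
        push_neg at hcc
        have := hple (m0 + 1) (X i) (by omega) hcc (by omega)
        omega
      omega
    · rw [hcase] at hXi0 hq
      rw [hXi0] at hq
      omega
    · have hZge : Z (i + 1) ≤ Z i0 := by
        rcases eq_or_lt_of_le (show i + 1 ≤ i0 by omega) with h | h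
        · rw [h]
        · rw [hZ (i + 1) (by omega) (by omega), hZ i0 hi01 hi0r]
          exact le_of_lt (hXsorted (i + 1) i0 (by omega) h hi0r)
      omega
  have hebound : e ≤ Z i + len (X i) - 2 := by omega
  -- backward lemma
  have hB : ∀ w, 1 ≤ w → w ≤ n → b ≤ LF L n w → LF L n w ≤ e →
      p (X i) + (b - Z i) ≤ w ∧ w ≤ p (X i) + (e - Z i) := by
    intro w h1 h2 hb' he'
    have hkk : LF L n w - Z i < len (X i) := by omega
    have hrun := hLFrun (LF L n w - Z i) hkk
    have hmemk : 1 ≤ p (X i) + (LF L n w - Z i) ∧ p (X i) + (LF L n w - Z i) ≤ n := by omega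
    have heq2 : LF L n (p (X i) + (LF L n w - Z i)) = LF L n w := by
      rw [hrun, ← hZi]; omega
    have := LF_injOn L n _ _ hmemk.1 hmemk.2 h1 h2 heq2
    omega
  -- existence of preimages of [b..e]
  have hEx : ∀ t, b ≤ t → t ≤ e → ∃ w, w ∈ SAIv T SA n Q ∧ L w = c ∧
      p (X i) + (b - Z i) ≤ w ∧ w ≤ p (X i) + (e - Z i) := by
    intro t hbt hte
    have htI : t ∈ SAIv T SA n (c :: Q) := by rw [hIv]; exact Set.mem_Icc.mpr ⟨hbt, hte⟩
    obtain ⟨ht1, htn, hpre⟩ := htI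
    have hSAt := hSAmem t ht1 htn
    obtain ⟨hsubQ, hlen2⟩ := prefix_suffix_eq_substr (List.cons_ne_nil c Q) hpre
    have hvn : SA t + 1 ≤ n := by rw [hlenP] at hlen2; omega
    rw [suffix_cons T hSAt.2] at hpre
    obtain ⟨hhead, htail⟩ := List.cons_prefix_cons.mp hpre
    obtain ⟨w, hwmem, hSAw⟩ := hSAbij.surjOn (Set.mem_Icc.mpr ⟨(by omega : 1 ≤ SA t + 1), hvn⟩)
    obtain ⟨hw1, hwn⟩ := Set.mem_Icc.mp hwmem
    have hwQ : w ∈ SAIv T SA n Q := ⟨hw1, hwn, by rw [hSAw]; exact htail⟩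
    have hne : ¬ SA w = 1 := by omega
    have hLw : L w = c := by
      rw [hL w hw1 hwn, if_neg hne, hSAw, Nat.add_sub_cancel]
      exact hhead.symm
    have hLF := LF_eq n T SA L hlast hSAbij hSAsorted hL hw1 hwn ht1 htn
      (by omega) (by omega)
    have hBw := hB w hw1 hwn (by omega) (by omega)
    exact ⟨w, hwQ, hLw, hBw.1, hBw.2⟩
  -- I(Q) is an interval
  have hIQint : ∀ a a' w, a ∈ SAIv T SA n Q → a' ∈ SAIv T SA n Q → a ≤ w → w ≤ a' →
      w ∈ SAIv T SA n Q := by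
    intro a a' w ha ha' haw hwa
    obtain ⟨ha1, han, hapre⟩ := ha
    obtain ⟨ha'1, ha'n, ha'pre⟩ := ha'
    refine ⟨by omega, by omega, ?_⟩
    apply prefix_of_lex_between Q (suffix T n (SA a)) _ (suffix T n (SA a')) hapre ha'pre
    · rcases eq_or_lt_of_le haw with h | h
      · exact Or.inl (by rw [h])
      · exact Or.inr (hSAsorted a w ha1 h (by omega))
    · rcases eq_or_lt_of_le hwa with h | h
      · exact Or.inl (by rw [h])
      · exact Or.inr (hSAsorted w a' (by omega) h ha'n)
  -- witness at b
  obtain ⟨jb, hjbQ, hjbc, hjblo, hjbhi⟩ := hEx b le_rfl hbe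
  have hlo1 : 1 ≤ b - Z i := by omega
  have hhi2 : e - Z i ≤ len (X i) - 2 := by omega
  have hd : L (p (X i)) = c := by
    rw [← hjbc]
    exact (hconst jb (by omega) (by omega)).symm
  have hrunc : ∀ w, p (X i) ≤ w → w < p (X i) + len (X i) → L w = c := by
    intro w h1 h2
    rw [hconst w h1 h2, hd]
  obtain ⟨hj1, hjn, hjpre⟩ := hjQ
  have hjQ' : j ∈ SAIv T SA n Q := ⟨hj1, hjn, hjpre⟩
  -- main claim : L j = c
  have hLj : L j = c := by
    rcases Nat.lt_or_ge j (p (X i) + (b - Z i)) with hcase | hcase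
    · exfalso
      have hwQ : (p (X i) + (b - Z i) - 1) ∈ SAIv T SA n Q :=
        hIQint j jb _ hjQ' hjbQ (by omega) (by omega)
      have hwc : L (p (X i) + (b - Z i) - 1) = c := hrunc _ (by omega) (by omega)
      have hFw := hF _ hwQ hwc
      have hBw := hB _ (by omega) (by omega) hFw.1 hFw.2
      omega
    · rcases Nat.lt_or_ge (p (X i) + (e - Z i)) j with hcase2 | hcase2
      · exfalso
        have hwQ : (p (X i) + (e - Z i) + 1) ∈ SAIv T SA n Q :=
          hIQint jb j _ hjbQ hjQ' (by omega) (by omega)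
        have hwc : L (p (X i) + (e - Z i) + 1) = c := hrunc _ (by omega) (by omega)
        have hFw := hF _ hwQ hwc
        have hBw := hB _ (by omega) (by omega) hFw.1 hFw.2
        omega
      · exact hrunc j (by omega) (by omega)
  -- conclusions
  have hSAj := hSAmem j hj1 hjn
  have hne : ¬ SA j = 1 := by
    intro h
    rw [hL j hj1 hjn, if_pos h] at hLj
    exact (ne_of_lt hTnc) hLj
  have hj2 : 2 ≤ SA j := by omega
  have hTv : T (SA j - 1) = c := by
    rw [hL j hj1 hjn, if_neg hne] at hLj
    exact hLj
  obtain ⟨hQsub, hQlen⟩ := prefix_suffix_eq_substr hQ hjpre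
  have hOcc : SA j - 1 ∈ Occ T n (c :: Q) := by
    refine ⟨by omega, ?_, ?_⟩
    · rw [hlenP]; omega
    · rw [hlenP, substr_cons, show SA j - 1 + 1 = SA j by omega, hTv, ← hQsub]
  exact ⟨hLj, hj2, hOcc, fun h => ⟨by omega, hOcc⟩⟩
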